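/- arXiv:math/0409595 — 2 statements merged into one kernel-verified Lean document; each statement's English description precedes it below -/
import Mathlib

section
/- Let ω = i. For a nonzero complex number z and complex b, (1/4) Σ_{k=0}^{3} 1/(1 - (i^k z + i^{-k} z^{-1}) b) = (1 - 2b^2)/(1 - 4b^2 + 2b^4 - b^4(z^4 + z^{-4})), as an identity of rational functions valid wherever both sides are defined. -/
/-- n = 4 case: for `z ≠ 0`, whenever all denominators are nonzero,
`(1/4) Σ_{k=0}^{3} 1/(1 - (i^k z + i^{-k} z⁻¹) b)
  = (1 - 2b²)/(1 - 4b² + 2b⁴ - b⁴(z⁴ + z⁻⁴))`. -/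
theorem stmt4 (z b : ℂ) (hz : z ≠ 0)
    (h1 : ∀ k ∈ Finset.range 4,
      1 - (Complex.I ^ k * z + Complex.I⁻¹ ^ k * z⁻¹) * b ≠ 0)
    (h2 : 1 - 4 * b ^ 2 + 2 * b ^ 4 - b ^ 4 * (z ^ 4 + (z⁻¹) ^ 4) ≠ 0) :
    (1 / 4) * ∑ k ∈ Finset.range 4,
        1 / (1 - (Complex.I ^ k * z + Complex.I⁻¹ ^ k * z⁻¹) * b)
      = (1 - 2 * b ^ 2) / (1 - 4 * b ^ 2 + 2 * b ^ 4 - b ^ 4 * (z ^ 4 + (z⁻¹) ^ 4)) := by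
  have h0 := h1 0 (by norm_num)
  have ha := h1 1 (by norm_num)
  have hb := h1 2 (by norm_num)
  have hc := h1 3 (by norm_num)
  simp only [Finset.sum_range_succ, Finset.sum_range_zero, pow_zero, pow_one,
    Complex.inv_I, pow_succ, Complex.I_mul_I, mul_one, zero_add, neg_mul, neg_neg,
    one_mul, mul_neg] at *
  field_simp at h0 ha hb hc h2 ⊢
  replace h0 := (div_ne_zero_iff.mp h0).1
  replace ha := (div_ne_zero_iff.mp ha).1
  replace hb := (div_ne_zero_iff.mp hb).1
  replace hc := (div_ne_zero_iff.mp hc).1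
  replace h2 := (div_ne_zero_iff.mp h2).1
  rw [div_add_div _ _ h0 ha, div_add_div _ _ (mul_ne_zero h0 ha) hb,
    div_add_div _ _ (mul_ne_zero (mul_ne_zero h0 ha) hb) hc,
    div_eq_div_iff (mul_ne_zero (mul_ne_zero (mul_ne_zero h0 ha) hb) hc) h2]
  ring_nf
  rw [Complex.I_sq]
  ring
end

section
/- For ζ ∈ ℂ small and nonzero, let z_3 = (1 - 2N^2ζ^2 - √(1-4N^2ζ^2))/(2N^2ζ^2), z_4 = (1 - 2N^2ζ^2 + √(1-4N^2ζ^2))/(2N^2ζ^2), z_5 = (1 - 8(N-1)ζ^2 - √(1-16(N-1)ζ^2))/(8(N-1)ζ^2), z_6 = (1 - 8(N-1)ζ^2 + √(1-16(N-1)ζ^2))/(8(N-1)ζ^2). Then (z_3 - z_5)(z_6 - z_3) = ((N-2)^2/(4N^2(N-1)ζ^2)) · z_3. -/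
lemma half_mul (x : ℂ) : x ^ ((1:ℂ)/2) * x ^ ((1:ℂ)/2) = x := by
  by_cases hx : x = 0
  · simp [hx, Complex.zero_cpow (by norm_num : (1:ℂ)/2 ≠ 0)]
  · rw [← Complex.cpow_add _ _ hx]
    norm_num

/-- Key cancellation identity for `G_{2,…,2}`: with `z₃, z₄, z₅, z₆` the indicated roots
(defined via the principal square root), `(z₃ - z₅)(z₆ - z₃) = ((N-2)²/(4N²(N-1)ζ²))·z₃`. -/
theorem stmt9 (N : ℕ) (hN : 2 ≤ N) (ζ : ℂ) (hζ : ζ ≠ 0)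
    (hsmall : ‖ζ‖ < 1 / (4 * N)) :
    ∀ s t z3 z4 z5 z6 : ℂ,
      s = (1 - 4 * (N : ℂ) ^ 2 * ζ ^ 2) ^ ((1 : ℂ) / 2) →
      t = (1 - 16 * ((N : ℂ) - 1) * ζ ^ 2) ^ ((1 : ℂ) / 2) →
      z3 = (1 - 2 * (N : ℂ) ^ 2 * ζ ^ 2 - s) / (2 * (N : ℂ) ^ 2 * ζ ^ 2) →
      z4 = (1 - 2 * (N : ℂ) ^ 2 * ζ ^ 2 + s) / (2 * (N : ℂ) ^ 2 * ζ ^ 2) →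
      z5 = (1 - 8 * ((N : ℂ) - 1) * ζ ^ 2 - t) / (8 * ((N : ℂ) - 1) * ζ ^ 2) →
      z6 = (1 - 8 * ((N : ℂ) - 1) * ζ ^ 2 + t) / (8 * ((N : ℂ) - 1) * ζ ^ 2) →
      (z3 - z5) * (z6 - z3)
        = (((N : ℂ) - 2) ^ 2 / (4 * (N : ℂ) ^ 2 * ((N : ℂ) - 1) * ζ ^ 2)) * z3 := by
  intro s t z3 z4 z5 z6 hs ht h3 h4 h5 h6
  have hsq : s * s = 1 - 4 * (N : ℂ) ^ 2 * ζ ^ 2 := by rw [hs]; exact half_mul _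
  have htq : t * t = 1 - 16 * ((N : ℂ) - 1) * ζ ^ 2 := by rw [ht]; exact half_mul _
  have hN0 : (N : ℂ) ≠ 0 := Nat.cast_ne_zero.mpr (by omega)
  have hN1 : (N : ℂ) - 1 ≠ 0 := by
    intro h
    have h1 : (N : ℂ) = 1 := by linear_combination h
    have : (N : ℕ) = 1 := by exact_mod_cast h1
    omega
  have hz : ζ ^ 2 ≠ 0 := pow_ne_zero _ hζ
  have hb : (2 * (N : ℂ) ^ 2 * ζ ^ 2) ≠ 0 := by
    exact mul_ne_zero (mul_ne_zero two_ne_zero (pow_ne_zero _ hN0)) hz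
  have hc : (8 * ((N : ℂ) - 1) * ζ ^ 2) ≠ 0 := by
    exact mul_ne_zero (mul_ne_zero (by norm_num) hN1) hz
  have hD : (4 * (N : ℂ) ^ 2 * ((N : ℂ) - 1) * ζ ^ 2) ≠ 0 := by
    exact mul_ne_zero (mul_ne_zero (mul_ne_zero (by norm_num) (pow_ne_zero _ hN0)) hN1) hz
  have H3 : z3 * (2 * (N : ℂ) ^ 2 * ζ ^ 2) = 1 - 2 * (N : ℂ) ^ 2 * ζ ^ 2 - s :=
    (eq_div_iff hb).mp h3
  have H5 : z5 * (8 * ((N : ℂ) - 1) * ζ ^ 2) = 1 - 8 * ((N : ℂ) - 1) * ζ ^ 2 - t :=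
    (eq_div_iff hc).mp h5
  have H6 : z6 * (8 * ((N : ℂ) - 1) * ζ ^ 2) = 1 - 8 * ((N : ℂ) - 1) * ζ ^ 2 + t :=
    (eq_div_iff hc).mp h6
  set b : ℂ := 2 * (N : ℂ) ^ 2 * ζ ^ 2 with hbdef
  set c : ℂ := 8 * ((N : ℂ) - 1) * ζ ^ 2 with hcdef
  have main2 : b * c * ((4 * (N : ℂ) ^ 2 * ((N : ℂ) - 1) * ζ ^ 2) * ((z3 - z5) * (z6 - z3)))
      = b * c * ((((N : ℂ) - 2) ^ 2) * z3) := by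
    linear_combination
      (b * (N:ℂ)^2 / 2 * z3) * H5 + (b * (N:ℂ)^2 / 2 * z3) * H6
      - 2 * ((N:ℂ) - 1) * c * hsq
      - 2 * ((N:ℂ) - 1) * c * (b * z3 - (1 - b) - s) * H3
      + (b * (N:ℂ)^2 / 2) * htq
      - (b * (N:ℂ)^2 / 2) * (c * z6) * H5
      - (b * (N:ℂ)^2 / 2) * ((1 - c) - t) * H6
      - ((N:ℂ)^4 * ζ^2 * (1 - c) * z3) * H5 - ((N:ℂ)^4 * ζ^2 * (1 - c) * z3) * H6
  have main : (4 * (N : ℂ) ^ 2 * ((N : ℂ) - 1) * ζ ^ 2) * ((z3 - z5) * (z6 - z3))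
      = (((N : ℂ) - 2) ^ 2) * z3 :=
    mul_left_cancel₀ (mul_ne_zero hb hc) main2
  rw [div_mul_eq_mul_div, eq_div_iff hD]
  linear_combination main
end
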